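/- Fix α ∈ (1,√2) and y₁, y₂ ∈ [0,1], and suppose f(α,y₁,y₂) < 0, where f(α,y₁,y₂) = 4 − y₁ − y₂ − 2α²/(1 + y₁y₂). Then for every ε > 0 and c > 0 there exist δ > 0 and n₀ > 0 such that for all n ≥ n₀ and all positive integers k ≤ c log n, P( O(α,y₁,y₂,δ) ≠ ∅ ) < ε. -/

import Mathlib

open MeasureTheory ProbabilityTheory Filter
open scoped ENNReal NNReal

noncomputable section

/-- Sum of the entries of the submatrix of the infinite array `A` with row set `I`
and column set `J`. -/
def subSum (A : ℕ → ℕ → ℝ) (I J : Finset ℕ) : ℝ := ∑ i ∈ I, ∑ j ∈ J, A i j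

/-- Average entry of the submatrix of `A` with row set `I` and column set `J`. -/
def subAve (A : ℕ → ℕ → ℝ) (I J : Finset ℕ) : ℝ :=
  subSum A I J / ((I.card : ℝ) * (J.card : ℝ))

/-- The overlap exponent `f(α, y₁, y₂) = 4 − y₁ − y₂ − 2α²/(1 + y₁·y₂)`. -/
def fOGP (α y₁ y₂ : ℝ) : ℝ := 4 - y₁ - y₂ - 2 * α ^ 2 / (1 + y₁ * y₂)

open scoped Classical in
/-- The set `𝒪(α, y₁, y₂, δ)` of pairs of `k × k` submatrices `(C_{I₁,J₁}, C_{I₂,J₂})` of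
the `n × n` corner of `A` (encoded by the pairs of index sets `((I₁,J₁),(I₂,J₂))`) whose
average entries lie in `[(α−δ)√(2 log n / k), (α+δ)√(2 log n / k)]` and whose overlaps
satisfy `|I₁∩I₂|/k ∈ (y₁−δ, y₁+δ)` and `|J₁∩J₂|/k ∈ (y₂−δ, y₂+δ)`. -/
def overlapPairs (A : ℕ → ℕ → ℝ) (n k : ℕ) (α y₁ y₂ δ : ℝ) :
    Finset ((Finset ℕ × Finset ℕ) × (Finset ℕ × Finset ℕ)) :=
  (((Finset.range n).powersetCard k ×ˢ (Finset.range n).powersetCard k) ×ˢ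
    ((Finset.range n).powersetCard k ×ˢ (Finset.range n).powersetCard k)).filter
    fun P =>
      ((α - δ) * Real.sqrt (2 * Real.log n / k) ≤ subAve A P.1.1 P.1.2 ∧
        subAve A P.1.1 P.1.2 ≤ (α + δ) * Real.sqrt (2 * Real.log n / k)) ∧
      ((α - δ) * Real.sqrt (2 * Real.log n / k) ≤ subAve A P.2.1 P.2.2 ∧
        subAve A P.2.1 P.2.2 ≤ (α + δ) * Real.sqrt (2 * Real.log n / k)) ∧
      (y₁ - δ < ((P.1.1 ∩ P.2.1).card : ℝ) / k ∧ ((P.1.1 ∩ P.2.1).card : ℝ) / k < y₁ + δ) ∧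
      (y₂ - δ < ((P.1.2 ∩ P.2.2).card : ℝ) / k ∧ ((P.1.2 ∩ P.2.2).card : ℝ) / k < y₂ + δ)

section AuxOGP
open Real Finset

lemma pdf_mul_exp (s x : ℝ) :
    gaussianPDFReal 0 1 x * Real.exp (s * x)
      = Real.exp (s ^ 2 / 2) * gaussianPDFReal s 1 x := by
  simp only [gaussianPDFReal, NNReal.coe_one, mul_one, sub_zero]
  rw [mul_right_comm, mul_assoc, ← Real.exp_add, mul_comm (Real.exp _),
    mul_assoc, ← Real.exp_add]
  ring_nf

lemma integrable_pdf_mul_exp (s : ℝ) :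
    Integrable (fun x => gaussianPDFReal 0 1 x * Real.exp (s * x)) := by
  simp only [pdf_mul_exp]
  exact (integrable_gaussianPDFReal s 1).const_mul _

lemma integrable_exp_mul_gaussian (s : ℝ) :
    Integrable (fun x => Real.exp (s * x)) (gaussianReal 0 1) := by
  rw [gaussianReal_of_var_ne_zero _ one_ne_zero, gaussianPDF_def]
  have h : (fun x => ENNReal.ofReal (gaussianPDFReal 0 1 x))
      = (fun x => ((gaussianPDFReal 0 1 x).toNNReal : ℝ≥0∞)) := rfl
  rw [h, integrable_withDensity_iff_integrable_smul
    ((measurable_gaussianPDFReal 0 1).real_toNNReal)]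
  refine (integrable_pdf_mul_exp s).congr (Filter.Eventually.of_forall fun x => ?_)
  simp [NNReal.smul_def, Real.coe_toNNReal _ (gaussianPDFReal_nonneg 0 1 x)]

lemma integral_exp_mul_gaussian (s : ℝ) :
    ∫ x, Real.exp (s * x) ∂(gaussianReal 0 1) = Real.exp (s ^ 2 / 2) := by
  rw [gaussianReal_of_var_ne_zero _ one_ne_zero, gaussianPDF_def]
  have h : (fun x => ENNReal.ofReal (gaussianPDFReal 0 1 x))
      = (fun x => ((gaussianPDFReal 0 1 x).toNNReal : ℝ≥0∞)) := rfl
  rw [h, integral_withDensity_eq_integral_smul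
    ((measurable_gaussianPDFReal 0 1).real_toNNReal)]
  have : ∀ x : ℝ, (gaussianPDFReal 0 1 x).toNNReal • Real.exp (s * x)
      = Real.exp (s ^ 2 / 2) * gaussianPDFReal s 1 x := fun x => by
    rw [NNReal.smul_def, Real.coe_toNNReal _ (gaussianPDFReal_nonneg 0 1 x), smul_eq_mul, pdf_mul_exp]
  rw [funext this, integral_const_mul, integral_gaussianPDFReal_eq_one s one_ne_zero, mul_one]

variable {Ω : Type} [MeasurableSpace Ω] {μ : Measure Ω}

lemma integrable_exp_mul_of_gauss {X : Ω → ℝ} (hm : Measurable X)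
    (hmap : μ.map X = gaussianReal 0 1) (s : ℝ) :
    Integrable (fun ω => Real.exp (s * X ω)) μ := by
  have := (integrable_map_measure (f := X) (g := fun x => Real.exp (s * x))
    (measurable_exp.comp (measurable_const_mul s)).aestronglyMeasurable
    hm.aemeasurable).mp (by rw [hmap]; exact integrable_exp_mul_gaussian s)
  exact this

lemma mgf_of_gauss {X : Ω → ℝ} (hm : Measurable X)
    (hmap : μ.map X = gaussianReal 0 1) (s : ℝ) :
    mgf X μ s = Real.exp (s ^ 2 / 2) := by
  have h := integral_map (φ := X) (μ := μ) hm.aemeasurable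
    (f := fun x => Real.exp (s * x))
    (measurable_exp.comp (measurable_const_mul s)).aestronglyMeasurable
  rw [hmap, integral_exp_mul_gaussian] at h
  rw [mgf, ← h]

lemma gauss_weighted_tail [IsProbabilityMeasure μ] {ι : Type*} [MeasurableSpace ι]
    (X : ι → Ω → ℝ) (hmeas : ∀ p, Measurable (X p))
    (hindep : iIndepFun X μ)
    (hgauss : ∀ p, μ.map (X p) = gaussianReal 0 1)
    (S : Finset ι) (c : ι → ℝ) (a v : ℝ) (ha : 0 ≤ a) (hv : 0 < v)
    (hvv : ∑ p ∈ S, (c p) ^ 2 = v) :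
    μ {ω | a ≤ ∑ p ∈ S, c p * X p ω} ≤ ENNReal.ofReal (Real.exp (-a ^ 2 / (2 * v))) := by
  classical
  set t := a / v with htdef
  have ht : 0 ≤ t := div_nonneg ha hv.le
  set Z : ι → Ω → ℝ := fun p ω => c p * X p ω with hZ
  have hZm : ∀ p, Measurable (Z p) := fun p => (hmeas p).const_mul _
  have hZindep : iIndepFun Z μ :=
    hindep.comp (fun p x => c p * x) (fun p => measurable_const_mul _)
  have hZint : ∀ (s : ℝ) (p : ι), Integrable (fun ω => Real.exp (s * Z p ω)) μ := by
    intro s p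
    have : (fun ω => Real.exp (s * Z p ω)) = fun ω => Real.exp ((s * c p) * X p ω) := by
      funext ω; rw [hZ]; ring_nf
    rw [this]
    exact integrable_exp_mul_of_gauss (hmeas p) (hgauss p) _
  have hZmgf : ∀ (s : ℝ) (p : ι), mgf (Z p) μ s = Real.exp ((s * c p) ^ 2 / 2) := by
    intro s p
    have : mgf (Z p) μ s = mgf (X p) μ (s * c p) := by
      unfold mgf
      congr 1; funext ω; rw [hZ]; ring_nf
    rw [this, mgf_of_gauss (hmeas p) (hgauss p)]
  have hsum : (fun ω => ∑ p ∈ S, c p * X p ω) = (∑ p ∈ S, Z p) := by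
    funext ω; rw [Finset.sum_apply]
  have hint : Integrable (fun ω => Real.exp (t * (∑ p ∈ S, Z p) ω)) μ :=
    ProbabilityTheory.iIndepFun.integrable_exp_mul_sum hZindep hZm (fun p _ => hZint t p)
  have hch := measure_ge_le_exp_mul_mgf (X := ∑ p ∈ S, Z p) (μ := μ) a ht hint
  have hmgf : mgf (∑ p ∈ S, Z p) μ t = Real.exp (t ^ 2 * v / 2) := by
    rw [ProbabilityTheory.iIndepFun.mgf_sum hZindep hZm S]
    have : ∀ p ∈ S, mgf (Z p) μ t = Real.exp ((t * c p) ^ 2 / 2) := fun p _ => hZmgf t p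
    rw [Finset.prod_congr rfl this, ← Real.exp_sum]
    congr 1
    rw [← hvv, Finset.mul_sum, Finset.sum_div]
    congr 1; funext p; ring
  rw [hmgf, ← Real.exp_add] at hch
  have harith : -t * a + t ^ 2 * v / 2 = -a ^ 2 / (2 * v) := by
    rw [htdef]; field_simp; ring
  rw [harith] at hch
  calc μ {ω | a ≤ ∑ p ∈ S, c p * X p ω} = μ {ω | a ≤ (∑ p ∈ S, Z p) ω} := by rw [← hsum]
    _ = ENNReal.ofReal ((μ {ω | a ≤ (∑ p ∈ S, Z p) ω}).toReal) :=
        (ENNReal.ofReal_toReal (measure_ne_top _ _)).symm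
    _ ≤ ENNReal.ofReal (Real.exp (-a ^ 2 / (2 * v))) := ENNReal.ofReal_le_ofReal hch

def cw (I₁ J₁ I₂ J₂ : Finset ℕ) (p : ℕ × ℕ) : ℝ :=
  (if p ∈ I₁ ×ˢ J₁ then 1 else 0) + (if p ∈ I₂ ×ˢ J₂ then 1 else 0)

lemma sum_ind {U s : Finset (ℕ × ℕ)} (hs : s ⊆ U) (f : ℕ × ℕ → ℝ) :
    ∑ p ∈ U, (if p ∈ s then f p else 0) = ∑ p ∈ s, f p := by
  rw [Finset.sum_ite_mem, Finset.inter_eq_right.mpr hs]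

lemma prod_inter_prod (I₁ J₁ I₂ J₂ : Finset ℕ) :
    (I₁ ×ˢ J₁) ∩ (I₂ ×ˢ J₂) = (I₁ ∩ I₂) ×ˢ (J₁ ∩ J₂) := by
  ext ⟨i, j⟩
  simp only [Finset.mem_inter, Finset.mem_product]
  tauto

lemma subSum_pair (A : ℕ → ℕ → ℝ) (I₁ J₁ I₂ J₂ : Finset ℕ) :
    subSum A I₁ J₁ + subSum A I₂ J₂
      = ∑ p ∈ (I₁ ×ˢ J₁) ∪ (I₂ ×ˢ J₂), cw I₁ J₁ I₂ J₂ p * A p.1 p.2 := by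
  have h1 : ∀ (I J : Finset ℕ), subSum A I J = ∑ p ∈ I ×ˢ J, A p.1 p.2 := by
    intro I J; rw [Finset.sum_product]; rfl
  simp only [cw, add_mul, ite_mul, one_mul, zero_mul, Finset.sum_add_distrib]
  rw [sum_ind Finset.subset_union_left, sum_ind Finset.subset_union_right, h1, h1]

lemma cw_sq_sum (I₁ J₁ I₂ J₂ : Finset ℕ) :
    ∑ p ∈ (I₁ ×ˢ J₁) ∪ (I₂ ×ˢ J₂), (cw I₁ J₁ I₂ J₂ p) ^ 2
      = (I₁.card : ℝ) * J₁.card + (I₂.card : ℝ) * J₂.card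
        + 2 * (((I₁ ∩ I₂).card : ℝ) * ((J₁ ∩ J₂).card : ℝ)) := by
  classical
  have hpt : ∀ p, (cw I₁ J₁ I₂ J₂ p) ^ 2
      = (if p ∈ I₁ ×ˢ J₁ then (1:ℝ) else 0) + (if p ∈ I₂ ×ˢ J₂ then (1:ℝ) else 0)
        + 2 * (if p ∈ (I₁ ×ˢ J₁) ∩ (I₂ ×ˢ J₂) then (1:ℝ) else 0) := by
    intro p
    by_cases h1 : p ∈ I₁ ×ˢ J₁ <;> by_cases h2 : p ∈ I₂ ×ˢ J₂ <;>
      simp [cw, h1, h2, Finset.mem_inter] <;> norm_num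
  simp only [hpt, Finset.sum_add_distrib]
  rw [← Finset.mul_sum, sum_ind Finset.subset_union_left,
    sum_ind Finset.subset_union_right,
    sum_ind (s := (I₁ ×ˢ J₁) ∩ (I₂ ×ˢ J₂))
      (Finset.inter_subset_left.trans Finset.subset_union_left)]
  rw [prod_inter_prod]
  simp only [Finset.sum_const, Finset.card_product, nsmul_eq_mul, mul_one]
  push_cast
  ring

lemma quad_tail [IsProbabilityMeasure μ] (C : Ω → ℕ → ℕ → ℝ)
    (hCmeas : ∀ i j, Measurable fun ω => C ω i j)
    (hCindep : iIndepFun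
      (fun p : ℕ × ℕ => fun ω => C ω p.1 p.2) μ)
    (hCgauss : ∀ i j, Measure.map (fun ω => C ω i j) μ = gaussianReal 0 1)
    (n k : ℕ) (hn : 1 ≤ n) (hk : 1 ≤ k) (β R : ℝ) (hβ : 0 ≤ β) (hR : 0 ≤ R)
    (I₁ J₁ I₂ J₂ : Finset ℕ)
    (hI₁ : I₁.card = k) (hJ₁ : J₁.card = k) (hI₂ : I₂.card = k) (hJ₂ : J₂.card = k)
    (hm : ((I₁ ∩ I₂).card : ℝ) * ((J₁ ∩ J₂).card : ℝ) ≤ R * (k : ℝ) ^ 2) :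
    μ {ω | β * Real.sqrt (2 * Real.log n / k) ≤ subAve (C ω) I₁ J₁ ∧
           β * Real.sqrt (2 * Real.log n / k) ≤ subAve (C ω) I₂ J₂}
      ≤ ENNReal.ofReal (Real.exp (-(2 * β ^ 2 * (k : ℝ) * Real.log n) / (1 + R))) := by
  classical
  have hk0 : (0 : ℝ) < (k : ℝ) := by exact_mod_cast hk
  have hL0 : (0 : ℝ) ≤ Real.log n := Real.log_nonneg (by exact_mod_cast hn)
  set L : ℝ := Real.log n with hLdef
  set a : ℝ := 2 * β * (k : ℝ) ^ 2 * Real.sqrt (2 * L / k) with hadef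
  have ha : 0 ≤ a := by positivity
  set m : ℝ := ((I₁ ∩ I₂).card : ℝ) * ((J₁ ∩ J₂).card : ℝ) with hmdef
  have hm0 : 0 ≤ m := by positivity
  set v : ℝ := 2 * (k : ℝ) ^ 2 + 2 * m with hvdef
  have hv : 0 < v := by positivity
  have hvv : ∑ p ∈ (I₁ ×ˢ J₁) ∪ (I₂ ×ˢ J₂), (cw I₁ J₁ I₂ J₂ p) ^ 2 = v := by
    rw [cw_sq_sum, hI₁, hJ₁, hI₂, hJ₂, hvdef, hmdef]; ring
  have hsub : {ω | β * Real.sqrt (2 * L / k) ≤ subAve (C ω) I₁ J₁ ∧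
           β * Real.sqrt (2 * L / k) ≤ subAve (C ω) I₂ J₂}
      ⊆ {ω | a ≤ ∑ p ∈ (I₁ ×ˢ J₁) ∪ (I₂ ×ˢ J₂), cw I₁ J₁ I₂ J₂ p * C ω p.1 p.2} := by
    intro ω hω
    obtain ⟨h1, h2⟩ := hω
    have hkk : (0 : ℝ) < (k : ℝ) * (k : ℝ) := by positivity
    have e1 : β * Real.sqrt (2 * L / k) * ((k:ℝ) * (k:ℝ)) ≤ subSum (C ω) I₁ J₁ := by
      refine (le_div_iff₀ hkk).mp ?_
      have h' := h1
      unfold subAve at h'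
      rw [hI₁, hJ₁] at h'
      exact h'
    have e2 : β * Real.sqrt (2 * L / k) * ((k:ℝ) * (k:ℝ)) ≤ subSum (C ω) I₂ J₂ := by
      refine (le_div_iff₀ hkk).mp ?_
      have h' := h2
      unfold subAve at h'
      rw [hI₂, hJ₂] at h'
      exact h'
    have : a ≤ subSum (C ω) I₁ J₁ + subSum (C ω) I₂ J₂ := by
      have : a = β * Real.sqrt (2 * L / k) * ((k:ℝ) * (k:ℝ))
          + β * Real.sqrt (2 * L / k) * ((k:ℝ) * (k:ℝ)) := by rw [hadef]; ring
      rw [this]; exact add_le_add e1 e2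
    rw [subSum_pair] at this
    exact this
  refine le_trans (measure_mono hsub) ?_
  refine le_trans (gauss_weighted_tail (fun p : ℕ × ℕ => fun ω => C ω p.1 p.2)
    (fun p => hCmeas p.1 p.2) hCindep (fun p => hCgauss p.1 p.2)
    _ _ a v ha hv hvv) ?_
  apply ENNReal.ofReal_le_ofReal
  apply Real.exp_le_exp.mpr
  have hsq : a ^ 2 = 8 * β ^ 2 * (k : ℝ) ^ 3 * L := by
    rw [hadef, mul_pow, mul_pow, Real.sq_sqrt (by positivity)]
    field_simp
    ring
  have hvle : v ≤ 2 * (k : ℝ) ^ 2 * (1 + R) := by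
    rw [hvdef]; nlinarith
  have h2v : 0 < 2 * v := by linarith
  have hle : a ^ 2 / (2 * (2 * (k : ℝ) ^ 2 * (1 + R))) ≤ a ^ 2 / (2 * v) :=
    div_le_div_of_nonneg_left (by positivity) h2v (by linarith)
  have heq : a ^ 2 / (2 * (2 * (k : ℝ) ^ 2 * (1 + R))) = 2 * β ^ 2 * (k : ℝ) * L / (1 + R) := by
    rw [hsq]
    have h1R : (0:ℝ) < 1 + R := by linarith
    field_simp
    ring
  rw [neg_div, neg_div, neg_le_neg_iff]
  rw [← heq]
  exact hle

open Finset in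
lemma count_D (n k : ℕ) (hn : 1 ≤ n) (B : ℝ) :
    ((((Finset.range n).powerset).filter
        (fun T => T.card ≤ k ∧ (T.card : ℝ) < B)).card : ℝ)
      ≤ ((k : ℝ) + 1) * Real.exp (B * Real.log n) := by
  classical
  set D := (((Finset.range n).powerset).filter
      (fun T => T.card ≤ k ∧ (T.card : ℝ) < B)) with hD
  have hsub : D ⊆ (Finset.range (k+1)).biUnion
      (fun j => ((Finset.range n).powersetCard j).filter (fun _ => (j : ℝ) < B)) := by
    intro T hT
    rw [hD, mem_filter, mem_powerset] at hT
    obtain ⟨hTsub, hTk, hTB⟩ := hT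
    rw [mem_biUnion]
    exact ⟨T.card, mem_range.mpr (Nat.lt_succ_of_le hTk),
      mem_filter.mpr ⟨mem_powersetCard.mpr ⟨hTsub, rfl⟩, hTB⟩⟩
  have h1 : (D.card : ℝ) ≤ ∑ j ∈ Finset.range (k+1),
      ((((Finset.range n).powersetCard j).filter (fun _ => (j : ℝ) < B)).card : ℝ) := by
    have := (card_le_card hsub).trans (card_biUnion_le)
    exact_mod_cast this
  refine h1.trans ?_
  have h2 : ∀ j ∈ Finset.range (k+1),
      ((((Finset.range n).powersetCard j).filter (fun _ => (j : ℝ) < B)).card : ℝ)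
        ≤ Real.exp (B * Real.log n) := by
    intro j _
    by_cases hc : (j : ℝ) < B
    · rw [filter_true_of_mem (fun _ _ => hc)]
      have hcard : ((Finset.range n).powersetCard j).card = n.choose j := by
        rw [card_powersetCard, card_range]
      rw [hcard]
      have hch : ((n.choose j : ℕ) : ℝ) ≤ ((n ^ j : ℕ) : ℝ) := by
        exact_mod_cast Nat.choose_le_pow n j
      refine hch.trans ?_
      have hlogn : (0:ℝ) ≤ Real.log n := Real.log_nonneg (by exact_mod_cast hn)
      have : ((n ^ j : ℕ) : ℝ) = Real.exp ((j : ℝ) * Real.log n) := by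
        push_cast
        rw [← Real.log_pow, Real.exp_log (by positivity)]
      rw [this]
      exact Real.exp_le_exp.mpr (by nlinarith)
    · rw [filter_false_of_mem (fun _ _ => hc)]
      simp [Real.exp_nonneg]
  refine (Finset.sum_le_sum h2).trans ?_
  rw [Finset.sum_const, card_range]
  push_cast
  rw [nsmul_eq_mul]
  push_cast
  exact le_refl _

open Finset in
lemma count_row (n k : ℕ) (hn : 1 ≤ n) (hk : 1 ≤ k) (γ B : ℝ)
    (hB : (k : ℝ) * (1 - γ) ≤ B) :
    (((((Finset.range n).powersetCard k) ×ˢ ((Finset.range n).powersetCard k)).filter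
        (fun r => γ < ((r.1 ∩ r.2).card : ℝ) / (k : ℝ))).card : ℝ)
      ≤ (n : ℝ) ^ k * 2 ^ k * (((k : ℝ) + 1) * Real.exp (B * Real.log n)) := by
  classical
  have hk0 : (0 : ℝ) < (k : ℝ) := by exact_mod_cast hk
  set P := (Finset.range n).powersetCard k with hP
  set D := (((Finset.range n).powerset).filter
      (fun T => T.card ≤ k ∧ (T.card : ℝ) < B)) with hD
  -- decompose the count over the first component
  have hdec : (((P ×ˢ P).filter
      (fun r => γ < ((r.1 ∩ r.2).card : ℝ) / (k : ℝ))).card : ℕ)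
      = ∑ I₁ ∈ P, (P.filter (fun I₂ => γ < ((I₁ ∩ I₂).card : ℝ) / (k : ℝ))).card := by
    rw [Finset.card_filter, Finset.sum_product]
    refine Finset.sum_congr rfl fun I₁ _ => ?_
    rw [Finset.card_filter]
  -- bound the inner count via an injection
  have hinner : ∀ I₁ ∈ P,
      (P.filter (fun I₂ => γ < ((I₁ ∩ I₂).card : ℝ) / (k : ℝ))).card ≤ 2 ^ k * D.card := by
    intro I₁ hI₁
    rw [hP, mem_powersetCard] at hI₁
    obtain ⟨hI₁sub, hI₁card⟩ := hI₁
    have hinj : (P.filter (fun I₂ => γ < ((I₁ ∩ I₂).card : ℝ) / (k : ℝ))).card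
        ≤ (I₁.powerset ×ˢ D).card := by
      apply Finset.card_le_card_of_injOn (fun I₂ => (I₁ ∩ I₂, I₂ \ I₁))
      · intro I₂ hI₂
        rw [mem_coe, mem_filter, hP, mem_powersetCard] at hI₂
        obtain ⟨⟨hI₂sub, hI₂card⟩, hcond⟩ := hI₂
        rw [mem_coe, mem_product, mem_powerset, hD, mem_filter, mem_powerset]
        refine ⟨inter_subset_left, sdiff_subset.trans hI₂sub, ?_, ?_⟩
        · exact (card_le_card sdiff_subset).trans (le_of_eq hI₂card)
        · have hab : (I₂ \ I₁).card + (I₂ ∩ I₁).card = k := by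
            rw [card_sdiff_add_card_inter, hI₂card]
          have hic : (I₂ ∩ I₁).card = (I₁ ∩ I₂).card := by rw [inter_comm]
          have hga : γ * (k : ℝ) < ((I₁ ∩ I₂).card : ℝ) :=
            (lt_div_iff₀ hk0).mp hcond
          have : ((I₂ \ I₁).card : ℝ) = (k : ℝ) - ((I₁ ∩ I₂).card : ℝ) := by
            rw [← hic]
            have := hab
            push_cast [← this]
            ring
          rw [this]
          nlinarith
      · intro I₂ h₂ I₂' h₂' heq
        simp only [Prod.mk.injEq] at heq
        have e1 : I₂ \ I₁ ∪ I₂ ∩ I₁ = I₂ := sdiff_union_inter I₂ I₁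
        have e2 : I₂' \ I₁ ∪ I₂' ∩ I₁ = I₂' := sdiff_union_inter I₂' I₁
        rw [← e1, ← e2, heq.2, inter_comm I₂ I₁, inter_comm I₂' I₁, heq.1]
    refine hinj.trans ?_
    rw [card_product, card_powerset, hI₁card]
  have htotal : (((P ×ˢ P).filter
      (fun r => γ < ((r.1 ∩ r.2).card : ℝ) / (k : ℝ))).card : ℕ)
      ≤ n.choose k * (2 ^ k * D.card) := by
    rw [hdec]
    refine (Finset.sum_le_sum hinner).trans ?_
    rw [Finset.sum_const, hP, card_powersetCard, card_range, smul_eq_mul]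
  have hreal : ((n.choose k * (2 ^ k * D.card) : ℕ) : ℝ)
      ≤ (n : ℝ) ^ k * 2 ^ k * (((k : ℝ) + 1) * Real.exp (B * Real.log n)) := by
    push_cast
    have h1 : ((n.choose k : ℕ) : ℝ) ≤ (n : ℝ) ^ k := by
      exact_mod_cast Nat.choose_le_pow n k
    have h2 : ((D.card : ℕ) : ℝ) ≤ ((k : ℝ) + 1) * Real.exp (B * Real.log n) := by
      rw [hD]; exact count_D n k hn B
    have h3 : (0:ℝ) ≤ ((D.card : ℕ) : ℝ) := by positivity
    have h4 : (0:ℝ) ≤ (2:ℝ) ^ k := by positivity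
    calc ((n.choose k : ℕ) : ℝ) * ((2:ℝ) ^ k * ((D.card : ℕ) : ℝ))
        ≤ (n : ℝ) ^ k * ((2:ℝ) ^ k * (((k : ℝ) + 1) * Real.exp (B * Real.log n))) := by
          apply mul_le_mul h1 (by apply mul_le_mul_of_nonneg_left h2 h4) (by positivity)
            (by positivity)
      _ = (n : ℝ) ^ k * 2 ^ k * (((k : ℝ) + 1) * Real.exp (B * Real.log n)) := by ring
  exact le_trans (by exact_mod_cast htotal) hreal

open Finset in
open scoped Classical in
lemma count_split {A : Type*} [DecidableEq A] (P : Finset A)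
    (r c : A → A → Prop) :
    ((((P ×ˢ P) ×ˢ (P ×ˢ P)).filter (fun q => r q.1.1 q.2.1 ∧ c q.1.2 q.2.2)).card)
      = (((P ×ˢ P).filter fun u => r u.1 u.2).card)
        * (((P ×ˢ P).filter fun u => c u.1 u.2).card) := by
  rw [Finset.card_filter, Finset.card_filter, Finset.card_filter]
  rw [Finset.sum_product]
  have step1 : ∀ u : A × A, ∑ w ∈ P ×ˢ P, (if r u.1 w.1 ∧ c u.2 w.2 then (1:ℕ) else 0)
      = ∑ I₂ ∈ P, ∑ J₂ ∈ P, (if r u.1 I₂ then (1:ℕ) else 0) * (if c u.2 J₂ then 1 else 0) := by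
    intro u
    rw [Finset.sum_product]
    refine Finset.sum_congr rfl fun I₂ _ => Finset.sum_congr rfl fun J₂ _ => ?_
    by_cases h1 : r u.1 I₂ <;> by_cases h2 : c u.2 J₂ <;> simp [h1, h2]
  simp only [step1]
  rw [Finset.sum_product]
  have step2 : ∀ I₁ J₁ : A, ∑ I₂ ∈ P, ∑ J₂ ∈ P,
      (if r I₁ I₂ then (1:ℕ) else 0) * (if c J₁ J₂ then 1 else 0)
      = (∑ I₂ ∈ P, if r I₁ I₂ then (1:ℕ) else 0) * (∑ J₂ ∈ P, if c J₁ J₂ then (1:ℕ) else 0) := by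
    intro I₁ J₁
    rw [Finset.sum_mul_sum]
  simp only [step2]
  rw [← Finset.sum_mul_sum]
  rw [Finset.sum_product, Finset.sum_product]

lemma delta_exists (α y₁ y₂ : ℝ) (hy₁ : 0 ≤ y₁) (hy₂ : 0 ≤ y₂)
    (hneg : fOGP α y₁ y₂ < 0) :
    ∃ δ : ℝ, 0 < δ ∧ δ < 1 ∧
      4 - y₁ - y₂ + 2 * δ - 2 * (α - δ) ^ 2 / (1 + (y₁ + δ) * (y₂ + δ))
        ≤ fOGP α y₁ y₂ / 2 := by
  set h : ℝ → ℝ := fun d =>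
    4 - y₁ - y₂ + 2 * d - 2 * (α - d) ^ 2 / (1 + (y₁ + d) * (y₂ + d)) with hh
  have hden0 : (1 : ℝ) + (y₁ + 0) * (y₂ + 0) ≠ 0 := by nlinarith [mul_nonneg hy₁ hy₂]
  have hcont : ContinuousAt h 0 := by
    apply ContinuousAt.sub
    · fun_prop
    · exact ContinuousAt.div (by fun_prop) (by fun_prop) hden0
  have hval : h 0 = fOGP α y₁ y₂ := by
    simp only [hh, fOGP]
    norm_num
  have hlt : h 0 < fOGP α y₁ y₂ / 2 := by rw [hval]; linarith
  have hev : ∀ᶠ d in nhds 0, h d < fOGP α y₁ y₂ / 2 :=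
    hcont.eventually_lt_const hlt
  rw [Metric.eventually_nhds_iff] at hev
  obtain ⟨r, hr, hrr⟩ := hev
  refine ⟨min (r / 2) (1 / 2), by positivity, ?_, ?_⟩
  · exact lt_of_le_of_lt (min_le_right _ _) (by norm_num)
  · have hd : dist (min (r / 2) (1 / 2)) 0 < r := by
      rw [Real.dist_eq, sub_zero, abs_of_pos (by positivity)]
      exact lt_of_le_of_lt (min_le_left _ _) (by linarith)
    exact (hrr hd).le

end AuxOGP

set_option maxHeartbeats 1000000 in
/-- **Theorem 4, second part (non-achievable overlaps).** Fix `α ∈ (1,√2)` and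
`y₁, y₂ ∈ [0,1]` with `f(α,y₁,y₂) < 0`. For every `ε > 0` and `c > 0` there exist `δ > 0`
and `n₀` such that for all `n ≥ n₀` and all positive integers `k ≤ c log n`,
`P(𝒪(α,y₁,y₂,δ) ≠ ∅) < ε`. -/
theorem overlap_empty_whp
    {Ω : Type} [MeasurableSpace Ω] (μ : Measure Ω) [IsProbabilityMeasure μ]
    (C : Ω → ℕ → ℕ → ℝ)
    (hCmeas : ∀ i j, Measurable fun ω => C ω i j)
    (hCindep : iIndepFun
      (fun p : ℕ × ℕ => fun ω => C ω p.1 p.2) μ)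
    (hCgauss : ∀ i j, Measure.map (fun ω => C ω i j) μ = gaussianReal 0 1)
    (α y₁ y₂ : ℝ) (hα₁ : 1 < α) (hα₂ : α < Real.sqrt 2)
    (hy₁ : y₁ ∈ Set.Icc (0 : ℝ) 1) (hy₂ : y₂ ∈ Set.Icc (0 : ℝ) 1)
    (hneg : fOGP α y₁ y₂ < 0) :
    ∀ ε : ℝ, 0 < ε → ∀ c : ℝ, 0 < c → ∃ δ : ℝ, 0 < δ ∧ ∃ n₀ : ℕ, 0 < n₀ ∧
      ∀ n, n₀ ≤ n → ∀ k : ℕ, 1 ≤ k → (k : ℝ) ≤ c * Real.log n →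
        μ {ω | (overlapPairs (C ω) n k α y₁ y₂ δ).Nonempty} < ENNReal.ofReal ε := by
  classical
  intro ε hε c hc
  obtain ⟨δ, hδ0, hδ1, hδf⟩ := delta_exists α y₁ y₂ hy₁.1 hy₂.1 hneg
  have hf : fOGP α y₁ y₂ < 0 := hneg
  set f := fOGP α y₁ y₂ with hfdef
  set M : ℝ := max 0 (-Real.log ε) with hM
  set L₀ : ℝ := (M + 3 + Real.log 4) * (2 / (-f)) with hL₀
  refine ⟨δ, hδ0, max 2 (Nat.ceil (Real.exp L₀) + 1), lt_of_lt_of_le (by norm_num)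
    (le_max_left _ _), ?_⟩
  intro n hn k hk _
  have hn2 : 2 ≤ n := le_trans (le_max_left _ _) hn
  have hn1 : 1 ≤ n := by omega
  have hnR : (1:ℝ) ≤ (n:ℝ) := by exact_mod_cast hn1
  have hnR0 : (0:ℝ) < (n:ℝ) := by linarith
  set L : ℝ := Real.log n with hLdef
  have hL0 : 0 ≤ L := Real.log_nonneg hnR
  have hLL₀ : L₀ ≤ L := by
    have h1 : ((Nat.ceil (Real.exp L₀) + 1 : ℕ) : ℝ) ≤ (n:ℝ) := by
      exact_mod_cast le_trans (le_max_right _ _) hn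
    have h2 : Real.exp L₀ ≤ (n:ℝ) := by
      have h3 := Nat.le_ceil (Real.exp L₀)
      have h4 : Real.exp L₀ ≤ ((Nat.ceil (Real.exp L₀) + 1 : ℕ) : ℝ) := by
        push_cast; linarith
      exact h4.trans h1
    calc L₀ = Real.log (Real.exp L₀) := (Real.log_exp _).symm
      _ ≤ L := Real.log_le_log (Real.exp_pos _) h2
  have hk0 : (0:ℝ) < (k:ℝ) := by exact_mod_cast hk
  set β : ℝ := α - δ with hβdef
  have hβ : 0 ≤ β := by rw [hβdef]; linarith
  set R : ℝ := (y₁ + δ) * (y₂ + δ) with hRdef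
  have hR0 : 0 ≤ R := mul_nonneg (by linarith [hy₁.1]) (by linarith [hy₂.1])
  set P := (Finset.range n).powersetCard k with hPdef
  set amb := (P ×ˢ P) ×ˢ (P ×ˢ P) with hamb
  set preal : ℝ := Real.exp (-(2 * β ^ 2 * (k:ℝ) * Real.log n) / (1 + R)) with hpreal
  set p : ℝ≥0∞ := ENNReal.ofReal preal with hp
  set cond : ((Finset ℕ × Finset ℕ) × (Finset ℕ × Finset ℕ)) → Prop := fun q =>
    (y₁ - δ < ((q.1.1 ∩ q.2.1).card : ℝ) / k ∧ ((q.1.1 ∩ q.2.1).card : ℝ) / k < y₁ + δ) ∧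
    (y₂ - δ < ((q.1.2 ∩ q.2.2).card : ℝ) / k ∧ ((q.1.2 ∩ q.2.2).card : ℝ) / k < y₂ + δ)
    with hcond
  -- union bound
  have hsub : {ω | (overlapPairs (C ω) n k α y₁ y₂ δ).Nonempty}
      ⊆ ⋃ q ∈ amb, {ω | q ∈ overlapPairs (C ω) n k α y₁ y₂ δ} := by
    intro ω hω
    obtain ⟨q, hq⟩ := hω
    exact Set.mem_biUnion (Finset.mem_of_mem_filter q hq) hq
  have hub : μ {ω | (overlapPairs (C ω) n k α y₁ y₂ δ).Nonempty}
      ≤ ∑ q ∈ amb, μ {ω | q ∈ overlapPairs (C ω) n k α y₁ y₂ δ} :=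
    (measure_mono hsub).trans (measure_biUnion_finset_le _ _)
  -- per-term bound
  have hterm : ∀ q ∈ amb, μ {ω | q ∈ overlapPairs (C ω) n k α y₁ y₂ δ}
      ≤ if cond q then p else 0 := by
    intro q hq
    rw [hamb, Finset.mem_product] at hq
    obtain ⟨hq1, hq2⟩ := hq
    rw [Finset.mem_product] at hq1 hq2
    have hI₁ := (Finset.mem_powersetCard.mp hq1.1).2
    have hJ₁ := (Finset.mem_powersetCard.mp hq1.2).2
    have hI₂ := (Finset.mem_powersetCard.mp hq2.1).2
    have hJ₂ := (Finset.mem_powersetCard.mp hq2.2).2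
    by_cases hcq : cond q
    · rw [if_pos hcq]
      have hsub2 : {ω | q ∈ overlapPairs (C ω) n k α y₁ y₂ δ}
          ⊆ {ω | β * Real.sqrt (2 * Real.log n / k) ≤ subAve (C ω) q.1.1 q.1.2 ∧
                 β * Real.sqrt (2 * Real.log n / k) ≤ subAve (C ω) q.2.1 q.2.2} := by
        intro ω hω
        simp only [overlapPairs, Finset.mem_filter] at hω
        exact ⟨hω.2.1.1, hω.2.2.1.1⟩
      refine (measure_mono hsub2).trans ?_
      have hm : (((q.1.1 ∩ q.2.1).card : ℝ) * ((q.1.2 ∩ q.2.2).card : ℝ))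
          ≤ R * (k:ℝ) ^ 2 := by
        obtain ⟨⟨_, hu1⟩, ⟨_, hu2⟩⟩ := hcq
        have h1 : ((q.1.1 ∩ q.2.1).card : ℝ) < (y₁ + δ) * k :=
          (div_lt_iff₀ hk0).mp hu1
        have h2 : ((q.1.2 ∩ q.2.2).card : ℝ) < (y₂ + δ) * k :=
          (div_lt_iff₀ hk0).mp hu2
        have h3 : (0:ℝ) ≤ ((q.1.1 ∩ q.2.1).card : ℝ) := Nat.cast_nonneg _
        have h4 : (0:ℝ) ≤ ((q.1.2 ∩ q.2.2).card : ℝ) := Nat.cast_nonneg _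
        have h5 : (0:ℝ) ≤ y₁ + δ := by linarith [hy₁.1]
        rw [hRdef]
        nlinarith
      exact quad_tail C hCmeas hCindep hCgauss n k hn1 hk β R hβ hR0
        q.1.1 q.1.2 q.2.1 q.2.2 hI₁ hJ₁ hI₂ hJ₂ hm
    · rw [if_neg hcq]
      have hempty : {ω | q ∈ overlapPairs (C ω) n k α y₁ y₂ δ} = ∅ := by
        ext ω
        simp only [Set.mem_setOf_eq, Set.mem_empty_iff_false, iff_false]
        intro hω
        simp only [overlapPairs, Finset.mem_filter] at hω
        exact hcq ⟨hω.2.2.2.1, hω.2.2.2.2⟩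
      rw [hempty]
      simp
  -- sum the bound
  have hsum2 : (∑ q ∈ amb, if cond q then p else 0) = ((amb.filter cond).card) • p := by
    rw [← Finset.sum_filter, Finset.sum_const]
  -- counting
  set Nr := ((P ×ˢ P).filter fun u => y₁ - δ < ((u.1 ∩ u.2).card : ℝ) / k).card with hNr
  set Nc := ((P ×ˢ P).filter fun u => y₂ - δ < ((u.1 ∩ u.2).card : ℝ) / k).card with hNc
  have hcount : (amb.filter cond).card ≤ Nr * Nc := by
    have hsubf : amb.filter cond ⊆ amb.filter (fun q =>
        (y₁ - δ < ((q.1.1 ∩ q.2.1).card : ℝ) / k) ∧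
        (y₂ - δ < ((q.1.2 ∩ q.2.2).card : ℝ) / k)) :=
      Finset.monotone_filter_right amb (fun q _ hcq => ⟨hcq.1.1, hcq.2.1⟩)
    refine (Finset.card_le_card hsubf).trans ?_
    rw [hamb, hNr, hNc]
    rw [count_split P (fun I₁ I₂ => y₁ - δ < ((I₁ ∩ I₂).card : ℝ) / k)
      (fun J₁ J₂ => y₂ - δ < ((J₁ ∩ J₂).card : ℝ) / k)]
  set B₁ : ℝ := (k:ℝ) * (1 - (y₁ - δ)) with hB₁
  set B₂ : ℝ := (k:ℝ) * (1 - (y₂ - δ)) with hB₂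
  have hNrB : (Nr : ℝ) ≤ (n:ℝ) ^ k * 2 ^ k * (((k:ℝ) + 1) * Real.exp (B₁ * L)) := by
    rw [hNr]
    exact count_row n k hn1 hk (y₁ - δ) B₁ (le_refl _)
  have hNcB : (Nc : ℝ) ≤ (n:ℝ) ^ k * 2 ^ k * (((k:ℝ) + 1) * Real.exp (B₂ * L)) := by
    rw [hNc]
    exact count_row n k hn1 hk (y₂ - δ) B₂ (le_refl _)
  -- final numeric bound
  have hfinal : ((amb.filter cond).card : ℝ) * preal < ε := by
    have hpreal0 : 0 ≤ preal := Real.exp_nonneg _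
    have hc1 : ((amb.filter cond).card : ℝ) ≤ (Nr : ℝ) * (Nc : ℝ) := by
      exact_mod_cast hcount
    have hnk : (n:ℝ) ^ k = Real.exp ((k:ℝ) * L) := by
      rw [Real.exp_nat_mul]
      congr 1
      rw [hLdef, Real.exp_log hnR0]
    have h2k : (2:ℝ) ^ k = Real.exp ((k:ℝ) * Real.log 2) := by
      rw [Real.exp_nat_mul, Real.exp_log (by norm_num : (0:ℝ) < 2)]
    have hk1 : ((k:ℝ) + 1) ≤ Real.exp (k:ℝ) := Real.add_one_le_exp (k:ℝ)
    have hprealE : preal = Real.exp ((k:ℝ) * L * (-(2 * β ^ 2 / (1 + R)))) := by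
      rw [hpreal, ← hLdef]
      congr 1
      ring
    set g : ℝ := 4 - y₁ - y₂ + 2 * δ - 2 * β ^ 2 / (1 + R) with hg
    have hgf : g ≤ f / 2 := hδf
    have hc2 : ((amb.filter cond).card : ℝ) * preal
        ≤ (Real.exp ((k:ℝ) * L) * Real.exp ((k:ℝ) * Real.log 2)
            * (Real.exp (k:ℝ) * Real.exp (B₁ * L)))
          * (Real.exp ((k:ℝ) * L) * Real.exp ((k:ℝ) * Real.log 2)
            * (Real.exp (k:ℝ) * Real.exp (B₂ * L)))
          * Real.exp ((k:ℝ) * L * (-(2 * β ^ 2 / (1 + R)))) := by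
      rw [← hprealE]
      apply mul_le_mul_of_nonneg_right _ hpreal0
      refine hc1.trans ?_
      have hNrB' : (Nr : ℝ) ≤ Real.exp ((k:ℝ) * L) * Real.exp ((k:ℝ) * Real.log 2)
          * (Real.exp (k:ℝ) * Real.exp (B₁ * L)) := by
        refine hNrB.trans ?_
        rw [hnk, h2k]
        gcongr
      have hNcB' : (Nc : ℝ) ≤ Real.exp ((k:ℝ) * L) * Real.exp ((k:ℝ) * Real.log 2)
          * (Real.exp (k:ℝ) * Real.exp (B₂ * L)) := by
        refine hNcB.trans ?_
        rw [hnk, h2k]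
        gcongr
      exact mul_le_mul hNrB' hNcB' (Nat.cast_nonneg _) (by positivity)
    have hceq : (Real.exp ((k:ℝ) * L) * Real.exp ((k:ℝ) * Real.log 2)
            * (Real.exp (k:ℝ) * Real.exp (B₁ * L)))
          * (Real.exp ((k:ℝ) * L) * Real.exp ((k:ℝ) * Real.log 2)
            * (Real.exp (k:ℝ) * Real.exp (B₂ * L)))
          * Real.exp ((k:ℝ) * L * (-(2 * β ^ 2 / (1 + R))))
        = Real.exp (2 * (k:ℝ) * (1 + Real.log 2) + (k:ℝ) * L * g) := by
      simp only [← Real.exp_add]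
      congr 1
      rw [hB₁, hB₂, hg]
      ring
    rw [hceq] at hc2
    refine lt_of_le_of_lt hc2 ?_
    have hexp1 : 2 * (k:ℝ) * (1 + Real.log 2) + (k:ℝ) * L * g
        ≤ (k:ℝ) * (2 + 2 * Real.log 2 + L * (f / 2)) := by
      have hmono : (k:ℝ) * L * g ≤ (k:ℝ) * L * (f / 2) :=
        mul_le_mul_of_nonneg_left hgf (by positivity)
      nlinarith
    have hlog4 : Real.log 4 = 2 * Real.log 2 := by
      rw [show (4:ℝ) = 2 ^ 2 by norm_num, Real.log_pow]
      push_cast; ring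
    have hS : 2 + 2 * Real.log 2 + L * (f / 2) ≤ -1 - M := by
      have hf2 : (0:ℝ) < -f := by linarith
      have hfne : f ≠ 0 := by linarith
      have hmono2 : L₀ * (-f / 2) ≤ L * (-f / 2) :=
        mul_le_mul_of_nonneg_right hLL₀ (by linarith)
      have hL₀v : L₀ * (-f / 2) = M + 3 + Real.log 4 := by
        rw [hL₀]
        field_simp
      have h7 : L * (f / 2) = -(L * (-f / 2)) := by ring
      linarith [hmono2, hL₀v, hlog4, h7]
    have hkS : (k:ℝ) * (2 + 2 * Real.log 2 + L * (f / 2)) ≤ -1 - M := by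
      have hk1' : (1:ℝ) ≤ (k:ℝ) := by exact_mod_cast hk
      have hMpos : 0 ≤ M := le_max_left _ _
      nlinarith
    have hMε : Real.exp (-1 - M) < ε := by
      have h5 : -1 - M < Real.log ε := by
        have h6 : -Real.log ε ≤ M := le_max_right _ _
        linarith
      calc Real.exp (-1 - M) < Real.exp (Real.log ε) := Real.exp_lt_exp.mpr h5
        _ = ε := Real.exp_log hε
    calc Real.exp (2 * (k:ℝ) * (1 + Real.log 2) + (k:ℝ) * L * g)
        ≤ Real.exp (-1 - M) := Real.exp_le_exp.mpr (hexp1.trans hkS)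
      _ < ε := hMε
  -- conclude
  calc μ {ω | (overlapPairs (C ω) n k α y₁ y₂ δ).Nonempty}
      ≤ ∑ q ∈ amb, μ {ω | q ∈ overlapPairs (C ω) n k α y₁ y₂ δ} := hub
    _ ≤ ∑ q ∈ amb, (if cond q then p else 0) := Finset.sum_le_sum hterm
    _ = ((amb.filter cond).card) • p := hsum2
    _ = ENNReal.ofReal (((amb.filter cond).card : ℝ) * preal) := by
        rw [hp, nsmul_eq_mul, ← ENNReal.ofReal_natCast ((amb.filter cond).card),
          ← ENNReal.ofReal_mul (Nat.cast_nonneg _)]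
    _ < ENNReal.ofReal ε := (ENNReal.ofReal_lt_ofReal_iff hε).mpr hfinal
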